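/- Let T be a rooted binary tree whose root ρ has children y₁ and y₂ with edge substitution probabilities p₁ and p₂, and let Y₁, Y₂ be the leaf sets of the subtrees rooted at y₁, y₂, with X = Y₁ ∪ Y₂. With P_i = 1 − 2p_i, the Fitch probabilities satisfy the recursion P_{αβ}(X) = [((1+P₁)/2)·P_α(Y₁) + ((1−P₁)/2)·P_β(Y₁)]·[((1−P₂)/2)·P_α(Y₂) + ((1+P₂)/2)·P_β(Y₂)] + [((1−P₁)/2)·P_α(Y₁) + ((1+P₁)/2)·P_β(Y₁)]·[((1+P₂)/2)·P_α(Y₂) + ((1−P₂)/2)·P_β(Y₂)] + P_{αβ}(Y₁)·P_{αβ}(Y₂). -/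

import Mathlib

/-!
Model: rooted binary phylogenetic trees whose edges carry substitution
probabilities, evolving binary characters (states `true` = α, `false` = β)
under the two-state symmetric (Neyman) model, and Fitch's maximum parsimony
algorithm.
-/

/-- A rooted binary tree; an internal node records the substitution
probabilities on the edges to its two children. -/
inductive PTree where
  | leaf : PTree
  | node (p₁ p₂ : ℝ) (t₁ t₂ : PTree) : PTree

/-- The type of binary characters on a tree: an assignment of a state
(`true` = α, `false` = β) to each leaf. -/
def PTree.Char : PTree → Type
  | .leaf => Bool
  | .node _ _ t₁ t₂ => t₁.Char × t₂.Char

instance PTree.Char.instFintype : (t : PTree) → Fintype t.Char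
  | .leaf => inferInstanceAs (Fintype Bool)
  | .node _ _ t₁ t₂ =>
      letI := PTree.Char.instFintype t₁
      letI := PTree.Char.instFintype t₂
      inferInstanceAs (Fintype (_ × _))

instance PTree.Char.instDecidableEq : (t : PTree) → DecidableEq t.Char
  | .leaf => inferInstanceAs (DecidableEq Bool)
  | .node _ _ t₁ t₂ =>
      letI := PTree.Char.instDecidableEq t₁
      letI := PTree.Char.instDecidableEq t₂
      inferInstanceAs (DecidableEq (_ × _))

/-- Single-edge transition probability of the two-state symmetric model:
conditional on the parent being in state `s`, the child is in state `s'`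
with probability `1 - p` if `s' = s` and `p` otherwise. -/
def transProb (p : ℝ) (s s' : Bool) : ℝ := if s' = s then 1 - p else p

/-- `t.charProb s c` is the probability that the character `c` is generated
at the leaves of `t` conditional on the root of `t` being in state `s`
(substitutions happen independently across edges). -/
def PTree.charProb : (t : PTree) → Bool → t.Char → ℝ
  | .leaf, s, c => @ite ℝ (c = s) (instDecidableEqBool c s) 1 0
  | .node p₁ p₂ t₁ t₂, s, c =>
      (∑ s₁ : Bool, transProb p₁ s s₁ * t₁.charProb s₁ c.1) *
      (∑ s₂ : Bool, transProb p₂ s s₂ * t₂.charProb s₂ c.2)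

/-- The state set assigned to the root by Fitch's maximum parsimony
algorithm: a leaf in state `s` gets `{s}`; an internal node gets the
intersection of the children's state sets if nonempty, else their union. -/
def PTree.fitch : (t : PTree) → t.Char → Finset Bool
  | .leaf, c => {c}
  | .node _ _ t₁ t₂, c =>
      if (t₁.fitch c.1 ∩ t₂.fitch c.2).Nonempty then t₁.fitch c.1 ∩ t₂.fitch c.2
      else t₁.fitch c.1 ∪ t₂.fitch c.2

/-- `P_α`: probability, conditional on the root being in state α, that MP
returns the state set `{α}`. -/
noncomputable def PTree.probAlpha (t : PTree) : ℝ :=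
  ∑ c : t.Char, if t.fitch c = {true} then t.charProb true c else 0

/-- `P_β`: probability, conditional on the root being in state α, that MP
returns the state set `{β}`. -/
noncomputable def PTree.probBeta (t : PTree) : ℝ :=
  ∑ c : t.Char, if t.fitch c = {false} then t.charProb true c else 0

/-- `P_{αβ}`: probability, conditional on the root being in state α, that MP
returns the state set `{α, β}`. -/
noncomputable def PTree.probBoth (t : PTree) : ℝ :=
  ∑ c : t.Char, if t.fitch c = ({true, false} : Finset Bool) then t.charProb true c else 0

/-- The reconstruction accuracy `RA = UA + AA/2` of maximum parsimony on all
leaves of `t`, the conditioning root state being the root of `t` itself. -/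
noncomputable def PTree.RA (t : PTree) : ℝ := t.probAlpha + t.probBoth / 2

/-- Probability of the character `c` on `t` conditional on the state `s` of an
ancestor vertex joined to the root of `t` by an edge of substitution
probability `p`. -/
noncomputable def PTree.charProbVia (t : PTree) (p : ℝ) (s : Bool) (c : t.Char) : ℝ :=
  ∑ s' : Bool, transProb p s s' * t.charProb s' c

/-- Reconstruction accuracy of MP applied to the subtree `t` (rooted at `y`),
where the ancestral state being estimated is that of a vertex `ρ` joined to
`y` by an edge of substitution probability `p`:
`RA = P(MP = {α} | ρ = α) + (1/2)·P(MP = {α,β} | ρ = α)`. -/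
noncomputable def PTree.RAVia (t : PTree) (p : ℝ) : ℝ :=
  (∑ c : t.Char, if t.fitch c = {true} then t.charProbVia p true c else 0) +
  (∑ c : t.Char, if t.fitch c = ({true, false} : Finset Bool) then t.charProbVia p true c else 0) / 2

/-- All edge substitution probabilities lie in `[0, 1/2]`. -/
def PTree.valid : PTree → Prop
  | .leaf => True
  | .node p₁ p₂ t₁ t₂ => 0 ≤ p₁ ∧ p₁ ≤ 1/2 ∧ 0 ≤ p₂ ∧ p₂ ≤ 1/2 ∧ t₁.valid ∧ t₂.valid

/-- The list of net substitution probabilities from the root to each leaf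
(obtained by chaining the single-edge substitution probabilities). -/
def PTree.leafFlipProbs : PTree → List ℝ
  | .leaf => [0]
  | .node p₁ p₂ t₁ t₂ =>
      (t₁.leafFlipProbs.map fun r => (1 - p₁) * r + p₁ * (1 - r)) ++
      (t₂.leafFlipProbs.map fun r => (1 - p₂) * r + p₂ * (1 - r))

/-- The balanced binary tree of depth `n` with substitution probability `q`
on every edge. -/
def balanced (q : ℝ) : ℕ → PTree
  | 0 => .leaf
  | n + 1 => .node q q (balanced q n) (balanced q n)

/-- `P_α(n,q)` for the balanced tree of depth `n`. -/
noncomputable def Palpha (n : ℕ) (q : ℝ) : ℝ := (balanced q n).probAlpha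

/-- `P_β(n,q)` for the balanced tree of depth `n`. -/
noncomputable def Pbeta (n : ℕ) (q : ℝ) : ℝ := (balanced q n).probBeta

/-- `P_{αβ}(n,q)` for the balanced tree of depth `n`. -/
noncomputable def Palphabeta (n : ℕ) (q : ℝ) : ℝ := (balanced q n).probBoth

attribute [local instance] PTree.Char.instFintype PTree.Char.instDecidableEq

/-- Flip all leaf states. -/
def PTree.flip : (t : PTree) → t.Char → t.Char
  | .leaf, c => !c
  | .node _ _ t₁ t₂, c => (t₁.flip c.1, t₂.flip c.2)

lemma PTree.flip_flip : (t : PTree) → ∀ c, t.flip (t.flip c) = c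
  | .leaf, c => Bool.not_not c
  | .node _ _ t₁ t₂, c => by simp [flip, t₁.flip_flip, t₂.flip_flip]; rfl

lemma PTree.flip_bijective (t : PTree) : Function.Bijective t.flip :=
  Function.bijective_iff_has_inverse.mpr ⟨t.flip, t.flip_flip, t.flip_flip⟩

lemma PTree.charProb_flip : (t : PTree) → ∀ s c, t.charProb s (t.flip c) = t.charProb (!s) c
  | .leaf, s, c => by
      simp only [charProb, flip]
      rcases s <;> rcases c <;> rfl
  | .node p₁ p₂ t₁ t₂, s, c => by
      simp only [charProb, flip, Fintype.sum_bool, t₁.charProb_flip, t₂.charProb_flip]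
      rcases s <;> simp [transProb] <;> ring

lemma bool_not_inj : Function.Injective not := fun a b h => by
  rcases a <;> rcases b <;> simp_all

lemma PTree.fitch_flip : (t : PTree) → ∀ c, t.fitch (t.flip c) = (t.fitch c).image not
  | .leaf, c => by rcases c <;> decide
  | .node _ _ t₁ t₂, c => by
      simp only [fitch, flip, t₁.fitch_flip, t₂.fitch_flip,
        ← Finset.image_inter _ _ bool_not_inj, ← Finset.image_union,
        Finset.image_nonempty]
      split <;> rfl

lemma PTree.sum_flip (t : PTree) (S : Finset Bool) :
    (∑ c : t.Char, if t.fitch c = S then t.charProb false c else 0) =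
    ∑ c : t.Char, if t.fitch c = S.image not then t.charProb true c else 0 := by
  rw [← Function.Bijective.sum_comp t.flip_bijective
    (fun c => if t.fitch c = S.image not then t.charProb true c else 0)]
  refine Fintype.sum_congr _ _ fun c => ?_
  simp only [t.fitch_flip, t.charProb_flip]
  have : (t.fitch c).image not = S.image not ↔ t.fitch c = S :=
    ⟨fun h => Finset.image_injective bool_not_inj h, fun h => by rw [h]⟩
  rw [if_congr this rfl rfl]
  simp

lemma PTree.fitch_cases : (t : PTree) → ∀ c, t.fitch c = {true} ∨ t.fitch c = {false} ∨
    t.fitch c = ({true, false} : Finset Bool)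
  | .leaf, c => by rcases c <;> simp [fitch] <;> decide
  | .node _ _ t₁ t₂, c => by
      simp only [fitch]
      rcases t₁.fitch_cases c.1 with h | h | h <;> rcases t₂.fitch_cases c.2 with h' | h' | h' <;>
        rw [h, h'] <;> decide

lemma PTree.sum_beta_flip (t : PTree) :
    (∑ c : t.Char, if t.fitch c = {true} then t.charProb false c else 0) = t.probBeta := by
  rw [t.sum_flip {true}]; rfl

lemma PTree.sum_alpha_flip (t : PTree) :
    (∑ c : t.Char, if t.fitch c = {false} then t.charProb false c else 0) = t.probAlpha := by
  rw [t.sum_flip {false}]; rfl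

lemma PTree.sum_both_flip (t : PTree) :
    (∑ c : t.Char, if t.fitch c = ({true, false} : Finset Bool) then t.charProb false c else 0)
      = t.probBoth := by
  rw [t.sum_flip ({true, false} : Finset Bool),
    show Finset.image not ({true, false} : Finset Bool) = {true, false} from by decide]
  rfl

lemma PTree.sum_if_lin (t : PTree) (p : ℝ) (S : Finset Bool) :
    (∑ c : t.Char, if t.fitch c = S then
        (1-p) * t.charProb true c + p * t.charProb false c else 0)
      = (1-p) * (∑ c : t.Char, if t.fitch c = S then t.charProb true c else 0)
        + p * (∑ c : t.Char, if t.fitch c = S then t.charProb false c else 0) := by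
  rw [Finset.mul_sum, Finset.mul_sum, ← Finset.sum_add_distrib]
  exact Fintype.sum_congr _ _ fun c => by split <;> simp

theorem stmt10' (p₁ p₂ : ℝ) (t₁ t₂ : PTree) :
    (PTree.node p₁ p₂ t₁ t₂).probBoth =
      ((1 + (1 - 2*p₁))/2 * t₁.probAlpha + (1 - (1 - 2*p₁))/2 * t₁.probBeta) *
        ((1 - (1 - 2*p₂))/2 * t₂.probAlpha + (1 + (1 - 2*p₂))/2 * t₂.probBeta)
      + ((1 - (1 - 2*p₁))/2 * t₁.probAlpha + (1 + (1 - 2*p₁))/2 * t₁.probBeta) *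
        ((1 + (1 - 2*p₂))/2 * t₂.probAlpha + (1 - (1 - 2*p₂))/2 * t₂.probBeta)
      + t₁.probBoth * t₂.probBoth := by
  set f₁ : t₁.Char → ℝ := fun c => (1-p₁) * t₁.charProb true c + p₁ * t₁.charProb false c with hf₁
  set f₂ : t₂.Char → ℝ := fun c => (1-p₂) * t₂.charProb true c + p₂ * t₂.charProb false c with hf₂
  have gprob : ∀ c : (PTree.node p₁ p₂ t₁ t₂).Char,
      (PTree.node p₁ p₂ t₁ t₂).charProb true c = f₁ c.1 * f₂ c.2 := by
    intro c
    simp [PTree.charProb, Fintype.sum_bool, transProb, hf₁, hf₂]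
  have hsplit : ∀ c : (PTree.node p₁ p₂ t₁ t₂).Char,
      (if (PTree.node p₁ p₂ t₁ t₂).fitch c = ({true, false} : Finset Bool)
          then (PTree.node p₁ p₂ t₁ t₂).charProb true c else 0)
      = (if t₁.fitch c.1 = {true} then f₁ c.1 else 0) *
          (if t₂.fitch c.2 = {false} then f₂ c.2 else 0)
        + (if t₁.fitch c.1 = {false} then f₁ c.1 else 0) *
          (if t₂.fitch c.2 = {true} then f₂ c.2 else 0)
        + (if t₁.fitch c.1 = ({true, false} : Finset Bool) then f₁ c.1 else 0) *
          (if t₂.fitch c.2 = ({true, false} : Finset Bool) then f₂ c.2 else 0) := by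
    intro c
    rw [gprob]
    rcases t₁.fitch_cases c.1 with h | h | h <;> rcases t₂.fitch_cases c.2 with h' | h' | h' <;>
      simp only [PTree.fitch, h, h'] <;>
      norm_num <;> simp (config := { decide := true })
  have key : (PTree.node p₁ p₂ t₁ t₂).probBoth
      = (∑ c : t₁.Char, if t₁.fitch c = {true} then f₁ c else 0) *
          (∑ c : t₂.Char, if t₂.fitch c = {false} then f₂ c else 0)
        + (∑ c : t₁.Char, if t₁.fitch c = {false} then f₁ c else 0) *
          (∑ c : t₂.Char, if t₂.fitch c = {true} then f₂ c else 0)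
        + (∑ c : t₁.Char, if t₁.fitch c = ({true, false} : Finset Bool) then f₁ c else 0) *
          (∑ c : t₂.Char, if t₂.fitch c = ({true, false} : Finset Bool) then f₂ c else 0) := by
    unfold PTree.probBoth
    rw [Fintype.sum_congr _ _ hsplit]
    have cast : ∀ G : t₁.Char × t₂.Char → ℝ,
        (∑ c : (PTree.node p₁ p₂ t₁ t₂).Char, G c) = ∑ c : t₁.Char × t₂.Char, G c := fun _ => rfl
    erw [cast, Fintype.sum_prod_type]
    simp only [Finset.sum_add_distrib, ← Finset.sum_mul, ← Finset.mul_sum]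
  rw [key]
  simp only [hf₁, hf₂, PTree.sum_if_lin, PTree.sum_alpha_flip, PTree.sum_beta_flip,
    PTree.sum_both_flip]
  have e1 : (∑ c : t₁.Char, if t₁.fitch c = {true} then t₁.charProb true c else 0)
      = t₁.probAlpha := rfl
  have e2 : (∑ c : t₁.Char, if t₁.fitch c = {false} then t₁.charProb true c else 0)
      = t₁.probBeta := rfl
  have e3 : (∑ c : t₁.Char, if t₁.fitch c = ({true, false} : Finset Bool)
      then t₁.charProb true c else 0) = t₁.probBoth := rfl
  have e4 : (∑ c : t₂.Char, if t₂.fitch c = {true} then t₂.charProb true c else 0)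
      = t₂.probAlpha := rfl
  have e5 : (∑ c : t₂.Char, if t₂.fitch c = {false} then t₂.charProb true c else 0)
      = t₂.probBeta := rfl
  have e6 : (∑ c : t₂.Char, if t₂.fitch c = ({true, false} : Finset Bool)
      then t₂.charProb true c else 0) = t₂.probBoth := rfl
  rw [e1, e2, e3, e4, e5, e6]
  ring
/-- recursion for `P_{αβ}` at the root in terms of the two root
subtrees, where the root is joined to the subtree roots by edges of
substitution probabilities `p₁`, `p₂` and `P_i = 1 − 2p_i`. -/
theorem stmt10 (p₁ p₂ : ℝ) (t₁ t₂ : PTree)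
    (h₁ : 0 ≤ p₁ ∧ p₁ ≤ 1/2) (h₂ : 0 ≤ p₂ ∧ p₂ ≤ 1/2)
    (hv₁ : t₁.valid) (hv₂ : t₂.valid) :
    (PTree.node p₁ p₂ t₁ t₂).probBoth =
      ((1 + (1 - 2*p₁))/2 * t₁.probAlpha + (1 - (1 - 2*p₁))/2 * t₁.probBeta) *
        ((1 - (1 - 2*p₂))/2 * t₂.probAlpha + (1 + (1 - 2*p₂))/2 * t₂.probBeta)
      + ((1 - (1 - 2*p₁))/2 * t₁.probAlpha + (1 + (1 - 2*p₁))/2 * t₁.probBeta) *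
        ((1 + (1 - 2*p₂))/2 * t₂.probAlpha + (1 - (1 - 2*p₂))/2 * t₂.probBeta)
      + t₁.probBoth * t₂.probBoth := by
  exact stmt10' p₁ p₂ t₁ t₂
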